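/- Let n ≥ 2 and equip the real vector space S²(so(n)) of self-adjoint endomorphisms of so(n) with the inner product ⟨R,S⟩ := tr(R∘S). Then the function P : S²(so(n)) → ℝ, P(R) := (1/3)·tr(R³ + R∘R^#), is differentiable, and its gradient at every R is ∇P(R) = R² + R^#; equivalently, the derivative of P at R in the direction S equals tr((R² + R^#)∘S) for every self-adjoint S. -/

import Mathlib

/-!
Common setup: we identify ⋀²ℝⁿ with the Lie algebra `so n` of real skew-symmetric
`n × n` matrices, sending `eᵢ ∧ eⱼ` to the rotation by `π/2` in the plane spanned by
`eᵢ, eⱼ`; the inner product on `so n` is `⟪A, B⟫ = -(1/2)·tr (A * B)`, and under this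
identification `v ∧ w` corresponds to the skew-symmetric matrix `v wᵀ - w vᵀ`, while
the wedge `A ∧ B` of two endomorphisms of `ℝⁿ` acts on a skew matrix `M` by
`M ↦ (1/2)(A M Bᵀ + B M Aᵀ)` (the unique linear extension of
`v∧w ↦ (1/2)(Av ∧ Bw + Bv ∧ Aw)`).
-/

noncomputable section

namespace BW

open Matrix

abbrev Mat (n : ℕ) := Matrix (Fin n) (Fin n) ℝ

/-- `so n`: the space of real skew-symmetric `n × n` matrices (≅ ⋀²ℝⁿ). -/
def so (n : ℕ) : Submodule ℝ (Mat n) where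
  carrier := {A | Aᵀ = -A}
  add_mem' := by
    intro A B hA hB
    simp only [Set.mem_setOf_eq] at *
    rw [Matrix.transpose_add, hA, hB, neg_add]
  zero_mem' := by simp
  smul_mem' := by
    intro c A hA
    simp only [Set.mem_setOf_eq] at *
    rw [Matrix.transpose_smul, hA, smul_neg]

variable {n : ℕ}

lemma mem_so_iff {A : Mat n} : A ∈ so n ↔ Aᵀ = -A := Iff.rfl

/-- The inner product `⟨A,B⟩ = -(1/2)·tr(AB)` on `so n`. -/
def ip (A B : so n) : ℝ := -(1/2) * Matrix.trace ((A : Mat n) * (B : Mat n))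

/-- `ip` as a linear map in the second variable. -/
def ipL (A : so n) : so n →ₗ[ℝ] ℝ where
  toFun B := ip A B
  map_add' B C := by
    simp only [ip, Submodule.coe_add, Matrix.mul_add, Matrix.trace_add]; ring
  map_smul' c B := by
    simp only [ip, SetLike.val_smul, Matrix.mul_smul, Matrix.trace_smul, smul_eq_mul,
      RingHom.id_apply]; ring

/-- The Lie bracket (matrix commutator) on `so n`. -/
def brk (A B : so n) : so n :=
  ⟨(A : Mat n) * (B : Mat n) - (B : Mat n) * (A : Mat n), by
    have hA : (A : Mat n)ᵀ = -(A : Mat n) := A.2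
    have hB : (B : Mat n)ᵀ = -(B : Mat n) := B.2
    rw [mem_so_iff, Matrix.transpose_sub, Matrix.transpose_mul, Matrix.transpose_mul, hA, hB]
    noncomm_ring⟩

/-- Auxiliary linear map underlying `A ∧ B`. -/
def wedgeAux (A B : Mat n) : Mat n →ₗ[ℝ] Mat n where
  toFun M := (1/2 : ℝ) • (A * M * Bᵀ + B * M * Aᵀ)
  map_add' M N := by
    simp only [mul_add, add_mul, smul_add]
    module
  map_smul' c M := by
    simp only [mul_smul_comm, smul_mul_assoc, RingHom.id_apply]
    module

lemma wedgeAux_mem (A B : Mat n) : ∀ M ∈ so n, wedgeAux A B M ∈ so n := by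
  intro M hM
  rw [mem_so_iff] at hM ⊢
  show ((1/2 : ℝ) • (A * M * Bᵀ + B * M * Aᵀ))ᵀ = -((1/2 : ℝ) • (A * M * Bᵀ + B * M * Aᵀ))
  rw [Matrix.transpose_smul, Matrix.transpose_add, Matrix.transpose_mul, Matrix.transpose_mul,
    Matrix.transpose_mul, Matrix.transpose_mul, Matrix.transpose_transpose,
    Matrix.transpose_transpose, hM]
  simp only [Matrix.neg_mul, Matrix.mul_neg, Matrix.mul_assoc, smul_neg, neg_add, smul_add]
  abel

/-- The wedge `A ∧ B` of two endomorphisms of ℝⁿ, as an endomorphism of `so n ≅ ⋀²ℝⁿ`: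
the unique linear map with `(A ∧ B)(v ∧ w) = (1/2)(Av ∧ Bw + Bv ∧ Aw)`. -/
def wedge (A B : Mat n) : Module.End ℝ (so n) :=
  (wedgeAux A B).restrict (p := so n) (q := so n) (wedgeAux_mem A B)

/-- The index set of pairs `i < j`. -/
def pairs (n : ℕ) : Finset (Fin n × Fin n) := Finset.univ.filter fun p => p.1 < p.2

/-- The standard basis vector `eᵢ` of ℝⁿ. -/
def evec (i : Fin n) : Fin n → ℝ := fun k => if k = i then 1 else 0

/-- `v ∧ w`, as an element of `so n ≅ ⋀²ℝⁿ`. -/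
def vwedge (v w : Fin n → ℝ) : so n :=
  ⟨Matrix.of fun i j => v i * w j - w i * v j, by
    rw [mem_so_iff]
    ext i j
    simp only [Matrix.transpose_apply, Matrix.of_apply, Matrix.neg_apply]
    ring⟩

/-- The orthonormal basis vector `eᵢ ∧ eⱼ` of `so n ≅ ⋀²ℝⁿ`. -/
def bvec (i j : Fin n) : so n := vwedge (evec i) (evec j)

/-- Hamilton's sharp product `R # S`: the self-adjoint endomorphism of `so n` determined by
`⟨(R#S)h, h⟩ = (1/2)·Σ_{α,β} ⟨[R(b_α), S(b_β)], h⟩·⟨[b_α, b_β], h⟩`,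
where `(b_α)` is the orthonormal basis `(eᵢ ∧ eⱼ)_{i<j}` of `so n`. -/
def sharp (R S : Module.End ℝ (so n)) : Module.End ℝ (so n) :=
  (1/4 : ℝ) • ∑ p ∈ pairs n, ∑ q ∈ pairs n,
    ((ipL (brk (R (bvec p.1 p.2)) (S (bvec q.1 q.2)))).smulRight
        (brk (bvec p.1 p.2) (bvec q.1 q.2))
      + (ipL (brk (bvec p.1 p.2) (bvec q.1 q.2))).smulRight
        (brk (R (bvec p.1 p.2)) (S (bvec q.1 q.2))))

/-- The right-hand side `R² + R^#` of Hamilton's ODE. -/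
def Qode (R : Module.End ℝ (so n)) : Module.End ℝ (so n) := R * R + sharp R R

/-- The coordinates `R_{ijkl} = ⟨R(eᵢ∧eⱼ), e_k∧e_l⟩` of an endomorphism of `so n`. -/
def Rcoord (R : Module.End ℝ (so n)) (i j k l : Fin n) : ℝ := ip (R (bvec i j)) (bvec k l)

/-- Self-adjointness with respect to the inner product `ip`. -/
def selfAdjEnd (R : Module.End ℝ (so n)) : Prop := ∀ X Y : so n, ip (R X) Y = ip X (R Y)

/-- A curvature operator: a self-adjoint endomorphism of `so n ≅ ⋀²ℝⁿ` satisfying the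
first Bianchi identity.  (`isCurvOp` carves out `S²_B(so n)`.) -/
def isCurvOp (R : Module.End ℝ (so n)) : Prop :=
  selfAdjEnd R ∧
    ∀ i j k l : Fin n, Rcoord R i j k l + Rcoord R j k i l + Rcoord R k i j l = 0

/-- The Ricci tensor `Ric_{ij} = Σ_k R_{ikjk}` of `R`. -/
def RicM (R : Module.End ℝ (so n)) : Mat n := Matrix.of fun i j => ∑ k, Rcoord R i k j k

/-- `λ̄ = tr(Ric)/n`. -/
def lamb (R : Module.End ℝ (so n)) : ℝ := Matrix.trace (RicM R) / (n : ℝ)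

/-- The traceless Ricci tensor `Ric₀ = Ric - (tr Ric / n)·id`. -/
def Ric0 (R : Module.End ℝ (so n)) : Mat n := RicM R - lamb R • (1 : Mat n)

/-- `σ = tr(Ric₀²)/n`. -/
def sigmaR (R : Module.End ℝ (so n)) : ℝ := Matrix.trace (Ric0 R * Ric0 R) / (n : ℝ)

/-- `R_I = (λ̄/(n-1))·(id ∧ id)`, the projection of `R` onto `⟨I⟩`. -/
def RI (R : Module.End ℝ (so n)) : Module.End ℝ (so n) :=
  (lamb R / ((n : ℝ) - 1)) • wedge (1 : Mat n) (1 : Mat n)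

/-- `R_{Ric₀} = (2/(n-2))·(Ric₀ ∧ id)`, the projection of `R` onto `⟨Ric₀⟩`. -/
def RRic0 (R : Module.End ℝ (so n)) : Module.End ℝ (so n) :=
  (2 / ((n : ℝ) - 2)) • wedge (Ric0 R) (1 : Mat n)

/-- The linear map `ℓ_{a,b}(R) = R + 2(n-1)a·R_I + (n-2)b·R_{Ric₀}`. -/
def lab (a b : ℝ) (R : Module.End ℝ (so n)) : Module.End ℝ (so n) :=
  R + (2 * ((n : ℝ) - 1) * a) • RI R + (((n : ℝ) - 2) * b) • RRic0 R

/-- Positive semidefiniteness of the quadratic form of an endomorphism of `so n`. -/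
def posSemidefEnd (R : Module.End ℝ (so n)) : Prop := ∀ X : so n, 0 ≤ ip (R X) X

/-- Positive definiteness of the quadratic form of an endomorphism of `so n`. -/
def posDefEnd (R : Module.End ℝ (so n)) : Prop := ∀ X : so n, X ≠ 0 → 0 < ip (R X) X

/-- `R` is 2-nonnegative: the sum of its two smallest eigenvalues is nonnegative;
equivalently (Ky Fan), `q_R(X) + q_R(Y) ≥ 0` for all orthonormal pairs `X, Y`. -/
def twoNonneg (R : Module.End ℝ (so n)) : Prop :=
  ∀ X Y : so n, ip X X = 1 → ip Y Y = 1 → ip X Y = 0 → 0 ≤ ip (R X) X + ip (R Y) Y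

/-- The (Frobenius) norm of an endomorphism of `so n`, computed in the orthonormal
basis `(eᵢ ∧ eⱼ)_{i<j}`. -/
def endNorm (R : Module.End ℝ (so n)) : ℝ :=
  Real.sqrt (∑ p ∈ pairs n, ip (R (bvec p.1 p.2)) (R (bvec p.1 p.2)))

/-- The tangent cone `T_R C`: the closure of `{t·(S - R) : S ∈ C, t ≥ 0}`. -/
def tangCone (C : Set (Module.End ℝ (so n))) (R : Module.End ℝ (so n)) :
    Set (Module.End ℝ (so n)) :=
  {X | ∀ ε > 0, ∃ S ∈ C, ∃ t : ℝ, 0 ≤ t ∧ endNorm (X - t • (S - R)) < ε}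

/-- `C` is a closed subset of the space of endomorphisms of `so n`. -/
def isClosedSet (C : Set (Module.End ℝ (so n))) : Prop :=
  ∀ X, (∀ ε > 0, ∃ Y ∈ C, endNorm (X - Y) < ε) → X ∈ C

/-- The interior of `C` relative to the subspace `S²_B(so n)` of curvature operators. -/
def interiorCurv (C : Set (Module.End ℝ (so n))) : Set (Module.End ℝ (so n)) :=
  {X | isCurvOp X ∧ ∃ ε > 0, ∀ Y, isCurvOp Y → endNorm (Y - X) < ε → Y ∈ C}

/-- Auxiliary linear map `M ↦ g M gᵀ` on matrices. -/
def conjAux (g : Mat n) : Mat n →ₗ[ℝ] Mat n where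
  toFun M := g * M * gᵀ
  map_add' M N := by simp only [mul_add, add_mul]
  map_smul' c M := by simp only [mul_smul_comm, smul_mul_assoc, RingHom.id_apply]

/-- `⋀²g` : the action `M ↦ g M gᵀ` of `g` on `so n ≅ ⋀²ℝⁿ` (for `g` orthogonal this is
the second exterior power of `g`). -/
def conjSo (g : Mat n) : Module.End ℝ (so n) :=
  (conjAux g).restrict (p := so n) (q := so n) (fun M hM => by
    rw [mem_so_iff] at hM ⊢
    show (g * M * gᵀ)ᵀ = -(g * M * gᵀ)
    rw [Matrix.transpose_mul, Matrix.transpose_mul, Matrix.transpose_transpose, hM]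
    simp only [Matrix.neg_mul, Matrix.mul_neg, Matrix.mul_assoc])

/-- The action `g · R = (⋀²g) ∘ R ∘ (⋀²g)⁻¹` of an orthogonal matrix `g`
(whose inverse is `gᵀ`) on endomorphisms of `so n`. -/
def onAct (g : Mat n) (R : Module.End ℝ (so n)) : Module.End ℝ (so n) :=
  conjSo g * R * conjSo gᵀ

/-- Two sets are at Hausdorff distance at most `ε` from each other. -/
def hdClose (A B : Set (Module.End ℝ (so n))) (ε : ℝ) : Prop :=
  (∀ X ∈ A, ∃ Y ∈ B, endNorm (X - Y) ≤ ε) ∧ ∀ Y ∈ B, ∃ X ∈ A, endNorm (X - Y) ≤ ε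

/-- The truncation `C ∩ {‖R‖ ≤ 1}`. -/
def truncSet (C : Set (Module.End ℝ (so n))) : Set (Module.End ℝ (so n)) :=
  {R ∈ C | endNorm R ≤ 1}


-- Auxiliary lemmas
lemma ip_symm (A B : so n) : ip A B = ip B A := by
  unfold ip; rw [Matrix.trace_mul_comm]

lemma ip_eq_ipL (A B : so n) : ip A B = ipL A B := rfl

lemma ip_add_right (A B C : so n) : ip A (B + C) = ip A B + ip A C := by
  rw [ip_eq_ipL, ip_eq_ipL, ip_eq_ipL, map_add]

lemma ip_smul_right (c : ℝ) (A B : so n) : ip A (c • B) = c * ip A B := by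
  rw [ip_eq_ipL, ip_eq_ipL, (ipL A).map_smul]; rfl

lemma ip_sum_right {ι : Type*} (s : Finset ι) (f : ι → so n) (A : so n) :
    ip A (∑ i ∈ s, f i) = ∑ i ∈ s, ip A (f i) := by
  rw [ip_eq_ipL, map_sum]; rfl

lemma ip_add_left (A B C : so n) : ip (A + B) C = ip A C + ip B C := by
  rw [ip_symm, ip_add_right, ip_symm A, ip_symm B]

lemma ip_smul_left (c : ℝ) (A B : so n) : ip (c • A) B = c * ip A B := by
  rw [ip_symm, ip_smul_right, ip_symm]

lemma ip_sum_left {ι : Type*} (s : Finset ι) (f : ι → so n) (A : so n) :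
    ip (∑ i ∈ s, f i) A = ∑ i ∈ s, ip (f i) A := by
  rw [ip_symm, ip_sum_right]; simp [ip_symm]

lemma ip_neg_left (A B : so n) : ip (-A) B = -ip A B := by
  rw [← neg_one_smul ℝ A, ip_smul_left]; ring

lemma brk_antisymm (A B : so n) : brk A B = -brk B A := by
  apply Subtype.ext
  show (A : Mat n) * B - (B : Mat n) * A = -((B : Mat n) * (A : Mat n) - (A : Mat n) * (B : Mat n))
  abel

lemma ip_brk_assoc (A B C : so n) : ip (brk A B) C = ip A (brk B C) := by
  show -(1/2) * Matrix.trace (((A : Mat n) * (B : Mat n) - (B : Mat n) * (A : Mat n)) * (C : Mat n))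
      = -(1/2) * Matrix.trace ((A : Mat n) * ((B : Mat n) * (C : Mat n) - (C : Mat n) * (B : Mat n)))
  rw [Matrix.sub_mul, Matrix.mul_sub, Matrix.trace_sub, Matrix.trace_sub]
  rw [Matrix.trace_mul_cycle ((B : Mat n)) (A : Mat n) (C : Mat n)]
  ring_nf
  rw [← Matrix.mul_assoc, Matrix.trace_mul_comm ((C : Mat n) * (B : Mat n)) (A : Mat n)]

end BW
namespace BW
variable {n : ℕ}

lemma bvec_coe (i j a b : Fin n) :
    ((bvec i j : so n) : Mat n) a b
      = (if a = i then (1:ℝ) else 0) * (if b = j then 1 else 0)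
        - (if a = j then (1:ℝ) else 0) * (if b = i then 1 else 0) := rfl

lemma ip_bvec_bvec (i j k l : Fin n) :
    ip (bvec i j) (bvec k l)
      = (if i = k then (1:ℝ) else 0) * (if j = l then 1 else 0)
        - (if i = l then (1:ℝ) else 0) * (if j = k then 1 else 0) := by
  simp only [ip, Matrix.trace, Matrix.diag_apply, Matrix.mul_apply, bvec_coe]
  simp only [sub_mul, mul_sub, ite_mul, mul_ite, one_mul, mul_one, zero_mul, mul_zero,
    Finset.sum_sub_distrib, Finset.sum_ite_eq, Finset.sum_ite_eq', Finset.mem_univ, if_true]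
  by_cases h1 : i = k <;> by_cases h2 : j = l <;> by_cases h3 : i = l <;> by_cases h4 : j = k <;>
    subst_eqs <;> simp_all [eq_comm] <;> ring

lemma so_apply_symm (X : so n) (a b : Fin n) : (X : Mat n) b a = -(X : Mat n) a b := by
  have h := X.2
  rw [mem_so_iff] at h
  have := congrFun (congrFun h a) b
  simpa [Matrix.transpose_apply] using this

lemma ip_bvec_right (X : so n) (i j : Fin n) : ip X (bvec i j) = (X : Mat n) i j := by
  simp only [ip, Matrix.trace, Matrix.diag_apply, Matrix.mul_apply, bvec_coe]
  simp only [mul_sub, mul_ite, mul_one, mul_zero, Finset.sum_ite_irrel, Finset.sum_const_zero,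
    Finset.sum_sub_distrib, Finset.sum_ite_eq, Finset.sum_ite_eq', Finset.mem_univ, if_true]
  rw [so_apply_symm X j i]
  ring

/-- expansion of any element of `so n` in the basis. -/
lemma complete (X : so n) :
    ∑ p ∈ pairs n, ip X (bvec p.1 p.2) • bvec p.1 p.2 = X := by
  apply Subtype.ext
  rw [AddSubmonoidClass.coe_finset_sum]
  ext a b
  rw [Matrix.sum_apply]
  have hterm : ∀ p : Fin n × Fin n,
      ((ip X (bvec p.1 p.2) • bvec p.1 p.2 : so n) : Mat n) a b
        = (X : Mat n) p.1 p.2 *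
          ((if a = p.1 then (1:ℝ) else 0) * (if b = p.2 then 1 else 0)
            - (if a = p.2 then (1:ℝ) else 0) * (if b = p.1 then 1 else 0)) := by
    intro p
    rw [Submodule.coe_smul, Matrix.smul_apply, bvec_coe, ip_bvec_right, smul_eq_mul]
  simp only [hterm]
  rcases lt_trichotomy a b with hab | hab | hab
  · rw [Finset.sum_eq_single_of_mem (a, b)]
    · simp [Fin.ne_of_lt hab]
    · simp [pairs, hab]
    · rintro ⟨i, j⟩ hij hne
      simp only [pairs, Finset.mem_filter, Finset.mem_univ, true_and] at hij
      by_cases h1 : a = i <;> by_cases h2 : b = j <;> by_cases h3 : a = j <;> by_cases h4 : b = i <;>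
        subst_eqs <;> simp_all <;> (try ring) <;> exact absurd hij (lt_asymm hab)
  · subst hab
    have h0 : (X : Mat n) a a = 0 := by
      have := so_apply_symm X a a; linarith
    rw [h0]
    apply Finset.sum_eq_zero
    intro p _
    ring
  · rw [Finset.sum_eq_single_of_mem (b, a)]
    · have h1 : ¬ a = b := (Fin.ne_of_lt hab).symm
      have h2 : ¬ b = a := Fin.ne_of_lt hab
      simp only [h1, h2, if_false, if_true, ite_self]
      have := so_apply_symm X a b
      simp only [this]
      ring
    · simp [pairs, hab]
    · rintro ⟨i, j⟩ hij hne
      simp only [pairs, Finset.mem_filter, Finset.mem_univ, true_and] at hij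
      by_cases h1 : a = i <;> by_cases h2 : b = j <;> by_cases h3 : a = j <;> by_cases h4 : b = i <;>
        subst_eqs <;> simp_all <;> (try ring) <;> exact absurd hij (lt_asymm hab)


/-- index type for the basis -/
abbrev PIdx (n : ℕ) := {p : Fin n × Fin n // p ∈ pairs n}

def bfun (p : PIdx n) : so n := bvec p.1.1 p.1.2

lemma mem_pairs {p : Fin n × Fin n} : p ∈ pairs n ↔ p.1 < p.2 := by
  simp [pairs]

lemma ortho (p q : PIdx n) : ip (bfun p) (bfun q) = if p = q then (1:ℝ) else 0 := by
  obtain ⟨⟨i,j⟩, hij'⟩ := p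
  obtain ⟨⟨k,l⟩, hkl'⟩ := q
  have hij : i < j := mem_pairs.mp hij'
  have hkl : k < l := mem_pairs.mp hkl'
  rw [bfun, bfun, ip_bvec_bvec]
  simp only [Subtype.mk.injEq, Prod.mk.injEq]
  have h34 : (if i = l then (1:ℝ) else 0) * (if j = k then 1 else 0) = 0 := by
    by_cases h3 : i = l
    · have h4 : ¬ j = k := by
        intro h4
        have h5 : i < k := h4 ▸ hij
        have h6 : k < i := by rw [← h3] at hkl; exact hkl
        exact absurd h6 (lt_asymm h5)
      simp [h4]
    · simp [h3]
  rw [h34, sub_zero]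
  by_cases h1 : i = k <;> by_cases h2 : j = l <;> simp [h1, h2]

lemma complete' (X : so n) : ∑ p : PIdx n, ip X (bfun p) • bfun p = X := by
  calc ∑ p : PIdx n, ip X (bfun p) • bfun p
      = ∑ p ∈ pairs n, ip X (bvec p.1 p.2) • bvec p.1 p.2 :=
        Finset.sum_coe_sort (pairs n) (fun p => ip X (bvec p.1 p.2) • bvec p.1 p.2)
    _ = X := complete X

lemma lin_indep : LinearIndependent ℝ (bfun (n := n)) := by
  rw [Fintype.linearIndependent_iff]
  intro g hg q
  have h := congrArg (fun Y => ip Y (bfun q)) hg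
  rw [ip_sum_left] at h
  simp only [ip_smul_left, ortho, mul_ite, mul_one, mul_zero,
    Finset.sum_ite_eq', Finset.mem_univ, if_true] at h
  simpa [ip] using h

lemma span_top : ⊤ ≤ Submodule.span ℝ (Set.range (bfun (n := n))) := by
  intro X _
  rw [← complete' X]
  exact Submodule.sum_mem _ fun p _ =>
    Submodule.smul_mem _ _ (Submodule.subset_span (Set.mem_range_self p))

def soBasis : Module.Basis (PIdx n) ℝ (so n) := Module.Basis.mk lin_indep span_top

lemma soBasis_apply (p : PIdx n) : (soBasis : Module.Basis (PIdx n) ℝ (so n)) p = bfun p :=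
  Module.Basis.mk_apply _ _ _

lemma soBasis_repr (X : so n) (q : PIdx n) :
    (soBasis : Module.Basis (PIdx n) ℝ (so n)).repr X q = ip X (bfun q) := by
  conv_lhs => rw [← complete' X]
  have : ∑ p : PIdx n, ip X (bfun p) • bfun p
      = ∑ p : PIdx n, ip X (bfun p) • (soBasis : Module.Basis (PIdx n) ℝ (so n)) p := by
    simp [soBasis_apply]
  rw [this, Module.Basis.repr_sum_self]

lemma trace_eq_sum (T : Module.End ℝ (so n)) :
    LinearMap.trace ℝ (so n) T = ∑ p ∈ pairs n, ip (T (bvec p.1 p.2)) (bvec p.1 p.2) := by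
  rw [LinearMap.trace_eq_matrix_trace ℝ (soBasis : Module.Basis (PIdx n) ℝ (so n)) T, Matrix.trace]
  rw [← Finset.sum_coe_sort (pairs n) (fun p => ip (T (bvec p.1 p.2)) (bvec p.1 p.2))]
  apply Finset.sum_congr rfl
  intro p _
  rw [Matrix.diag_apply, LinearMap.toMatrix_apply, soBasis_apply, soBasis_repr]
  rfl

lemma trace_smulRight (ℓ : so n →ₗ[ℝ] ℝ) (v : so n) :
    LinearMap.trace ℝ (so n) (ℓ.smulRight v) = ℓ v := by
  rw [trace_eq_sum]
  have : ∀ p : Fin n × Fin n, ip ((ℓ.smulRight v) (bvec p.1 p.2)) (bvec p.1 p.2)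
      = ℓ (ip v (bvec p.1 p.2) • bvec p.1 p.2) := by
    intro p
    rw [LinearMap.smulRight_apply, ip_smul_left, map_smul, smul_eq_mul, ip_symm]
    ring
  simp only [this]
  rw [← map_sum, complete v]


lemma brk_add_right (A B C : so n) : brk A (B + C) = brk A B + brk A C := by
  apply Subtype.ext
  show (A : Mat n) * ((B : Mat n) + (C : Mat n)) - ((B : Mat n) + (C : Mat n)) * (A : Mat n)
      = ((A : Mat n) * (B : Mat n) - (B : Mat n) * (A : Mat n))
        + ((A : Mat n) * (C : Mat n) - (C : Mat n) * (A : Mat n))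
  noncomm_ring

lemma brk_smul_right (c : ℝ) (A B : so n) : brk A (c • B) = c • brk A B := by
  apply Subtype.ext
  show (A : Mat n) * (c • (B : Mat n)) - (c • (B : Mat n)) * (A : Mat n)
      = c • ((A : Mat n) * (B : Mat n) - (B : Mat n) * (A : Mat n))
  rw [Matrix.mul_smul, Matrix.smul_mul, smul_sub]

lemma brk_add_left (A B C : so n) : brk (A + B) C = brk A C + brk B C := by
  apply Subtype.ext
  show ((A : Mat n) + (B : Mat n)) * (C : Mat n) - (C : Mat n) * ((A : Mat n) + (B : Mat n))
      = ((A : Mat n) * (C : Mat n) - (C : Mat n) * (A : Mat n))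
        + ((B : Mat n) * (C : Mat n) - (C : Mat n) * (B : Mat n))
  noncomm_ring

lemma brk_smul_left (c : ℝ) (A B : so n) : brk (c • A) B = c • brk A B := by
  apply Subtype.ext
  show (c • (A : Mat n)) * (B : Mat n) - (B : Mat n) * (c • (A : Mat n))
      = c • ((A : Mat n) * (B : Mat n) - (B : Mat n) * (A : Mat n))
  rw [Matrix.mul_smul, Matrix.smul_mul, smul_sub]

def brkL (A : so n) : so n →ₗ[ℝ] so n where
  toFun := brk A
  map_add' := brk_add_right A
  map_smul' c B := brk_smul_right c A B

lemma brk_sum_right {ι : Type*} (s : Finset ι) (f : ι → so n) (A : so n) :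
    brk A (∑ i ∈ s, f i) = ∑ i ∈ s, brk A (f i) :=
  map_sum (brkL A) f s

lemma ipL_add (A B : so n) : ipL (A + B) = ipL A + ipL B := by
  ext C; simp only [LinearMap.add_apply, ← ip_eq_ipL, ip_add_left]

lemma ipL_smul (c : ℝ) (A : so n) : ipL (c • A) = c • ipL A := by
  ext C; simp only [LinearMap.smul_apply, ← ip_eq_ipL, ip_smul_left, smul_eq_mul]

lemma ipL_neg (A : so n) : ipL (-A) = -ipL A := by
  ext C; simp only [LinearMap.neg_apply, ← ip_eq_ipL, ip_neg_left]

lemma smulRight_neg_neg (ℓ : so n →ₗ[ℝ] ℝ) (v : so n) :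
    (-ℓ).smulRight (-v) = ℓ.smulRight v := by
  ext X; simp

lemma add_smulRight (ℓ₁ ℓ₂ : so n →ₗ[ℝ] ℝ) (v : so n) :
    (ℓ₁ + ℓ₂).smulRight v = ℓ₁.smulRight v + ℓ₂.smulRight v := by
  ext X; simp [add_smul]

lemma smulRight_add (ℓ : so n →ₗ[ℝ] ℝ) (v w : so n) :
    ℓ.smulRight (v + w) = ℓ.smulRight v + ℓ.smulRight w := by
  ext X; simp [smul_add]

lemma smul_smulRight (c : ℝ) (ℓ : so n →ₗ[ℝ] ℝ) (v : so n) :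
    (c • ℓ).smulRight v = c • ℓ.smulRight v := by
  ext X
  simp only [LinearMap.smulRight_apply, LinearMap.smul_apply, smul_eq_mul, mul_smul]

lemma smulRight_smul (c : ℝ) (ℓ : so n →ₗ[ℝ] ℝ) (v : so n) :
    ℓ.smulRight (c • v) = c • ℓ.smulRight v := by
  ext X
  simp only [LinearMap.smulRight_apply, LinearMap.smul_apply]
  rw [smul_comm]

lemma mul_smulRight (T : Module.End ℝ (so n)) (ℓ : so n →ₗ[ℝ] ℝ) (v : so n) :
    T * (ℓ.smulRight v) = ℓ.smulRight (T v) := by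
  ext X; simp [Module.End.mul_apply]

lemma sharp_symm (R S : Module.End ℝ (so n)) : sharp R S = sharp S R := by
  rw [sharp, sharp]
  congr 1
  have key : ∀ p q : Fin n × Fin n,
      ((ipL (brk (R (bvec p.1 p.2)) (S (bvec q.1 q.2)))).smulRight
          (brk (bvec p.1 p.2) (bvec q.1 q.2))
        + (ipL (brk (bvec p.1 p.2) (bvec q.1 q.2))).smulRight
          (brk (R (bvec p.1 p.2)) (S (bvec q.1 q.2))))
      = ((ipL (brk (S (bvec q.1 q.2)) (R (bvec p.1 p.2)))).smulRight
          (brk (bvec q.1 q.2) (bvec p.1 p.2))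
        + (ipL (brk (bvec q.1 q.2) (bvec p.1 p.2))).smulRight
          (brk (S (bvec q.1 q.2)) (R (bvec p.1 p.2)))) := by
    intro p q
    rw [brk_antisymm (R (bvec p.1 p.2)) (S (bvec q.1 q.2)),
      brk_antisymm (bvec p.1 p.2) (bvec q.1 q.2), ipL_neg, ipL_neg,
      smulRight_neg_neg, smulRight_neg_neg]
  calc (∑ p ∈ pairs n, ∑ q ∈ pairs n,
        ((ipL (brk (R (bvec p.1 p.2)) (S (bvec q.1 q.2)))).smulRight
            (brk (bvec p.1 p.2) (bvec q.1 q.2))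
          + (ipL (brk (bvec p.1 p.2) (bvec q.1 q.2))).smulRight
            (brk (R (bvec p.1 p.2)) (S (bvec q.1 q.2)))))
      = ∑ p ∈ pairs n, ∑ q ∈ pairs n,
        ((ipL (brk (S (bvec q.1 q.2)) (R (bvec p.1 p.2)))).smulRight
            (brk (bvec q.1 q.2) (bvec p.1 p.2))
          + (ipL (brk (bvec q.1 q.2) (bvec p.1 p.2))).smulRight
            (brk (S (bvec q.1 q.2)) (R (bvec p.1 p.2)))) := by
        exact Finset.sum_congr rfl fun p _ => Finset.sum_congr rfl fun q _ => key p q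
    _ = _ := Finset.sum_comm

set_option maxRecDepth 10000 in
lemma trace_mul_sharp (T R S : Module.End ℝ (so n)) :
    LinearMap.trace ℝ (so n) (T * sharp R S)
      = (1/4) * ∑ p ∈ pairs n, ∑ q ∈ pairs n,
          (ip (brk (R (bvec p.1 p.2)) (S (bvec q.1 q.2)))
              (T (brk (bvec p.1 p.2) (bvec q.1 q.2)))
           + ip (brk (bvec p.1 p.2) (bvec q.1 q.2))
              (T (brk (R (bvec p.1 p.2)) (S (bvec q.1 q.2))))) := by
  rw [sharp, mul_smul_comm, map_smul, Finset.mul_sum, map_sum, smul_eq_mul]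
  congr 1
  apply Finset.sum_congr rfl
  intro p _
  rw [Finset.mul_sum, map_sum]
  apply Finset.sum_congr rfl
  intro q _
  rw [mul_add, map_add, mul_smulRight, mul_smulRight, trace_smulRight, trace_smulRight]
  rfl


lemma ip_neg_right (A B : so n) : ip A (-B) = -ip A B := by
  rw [ip_symm, ip_neg_left, ip_symm]

lemma ip_brk_swap (A X Y : so n) : ip (brk A X) Y = -ip (brk A Y) X := by
  rw [ip_brk_assoc, ip_brk_assoc, brk_antisymm X Y, ip_neg_right]

lemma sharp_add_left (R R' S : Module.End ℝ (so n)) :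
    sharp (R + R') S = sharp R S + sharp R' S := by
  rw [sharp, sharp, sharp, ← smul_add]
  congr 1
  rw [← Finset.sum_add_distrib]
  refine Finset.sum_congr rfl fun p _ => ?_
  rw [← Finset.sum_add_distrib]
  refine Finset.sum_congr rfl fun q _ => ?_
  simp only [LinearMap.add_apply, brk_add_left, ipL_add, add_smulRight, smulRight_add]
  abel

lemma sharp_add_right (R S S' : Module.End ℝ (so n)) :
    sharp R (S + S') = sharp R S + sharp R S' := by
  rw [sharp, sharp, sharp, ← smul_add]
  congr 1
  rw [← Finset.sum_add_distrib]
  refine Finset.sum_congr rfl fun p _ => ?_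
  rw [← Finset.sum_add_distrib]
  refine Finset.sum_congr rfl fun q _ => ?_
  simp only [LinearMap.add_apply, brk_add_right, ipL_add, add_smulRight, smulRight_add]
  abel

lemma sharp_smul_left (c : ℝ) (R S : Module.End ℝ (so n)) :
    sharp (c • R) S = c • sharp R S := by
  rw [sharp, sharp, smul_comm]
  congr 1
  rw [Finset.smul_sum]
  refine Finset.sum_congr rfl fun p _ => ?_
  rw [Finset.smul_sum]
  refine Finset.sum_congr rfl fun q _ => ?_
  simp only [LinearMap.smul_apply, brk_smul_left, ipL_smul, smul_smulRight, smulRight_smul,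
    smul_add]

lemma sharp_smul_right (c : ℝ) (R S : Module.End ℝ (so n)) :
    sharp R (c • S) = c • sharp R S := by
  rw [sharp, sharp, smul_comm]
  congr 1
  rw [Finset.smul_sum]
  refine Finset.sum_congr rfl fun p _ => ?_
  rw [Finset.smul_sum]
  refine Finset.sum_congr rfl fun q _ => ?_
  simp only [LinearMap.smul_apply, brk_smul_right, ipL_smul, smul_smulRight, smulRight_smul,
    smul_add]

lemma exp_ip_pair (X W : so n) :
    ip X W = ∑ r ∈ pairs n, ip W (bvec r.1 r.2) * ip X (bvec r.1 r.2) := by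
  conv_lhs => rw [← complete W]
  rw [ip_sum_right]
  exact Finset.sum_congr rfl fun r _ => by rw [ip_smul_right]

lemma exp_brk_ip (A Z W : so n) :
    ip (brk A Z) W
      = ∑ q ∈ pairs n, ip Z (bvec q.1 q.2) * ip (brk A (bvec q.1 q.2)) W := by
  conv_lhs => rw [← complete Z]
  rw [brk_sum_right, ip_sum_left]
  exact Finset.sum_congr rfl fun q _ => by rw [brk_smul_right, ip_smul_left]

lemma exp_ip_T (X Y : so n) (V : Module.End ℝ (so n)) :
    ip X (V Y) = ∑ r ∈ pairs n, ∑ r' ∈ pairs n,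
      ip Y (bvec r.1 r.2) * (ip (V (bvec r.1 r.2)) (bvec r'.1 r'.2) * ip X (bvec r'.1 r'.2)) := by
  conv_lhs => rw [← complete Y]
  rw [map_sum, ip_sum_right]
  refine Finset.sum_congr rfl fun r _ => ?_
  rw [map_smul, ip_smul_right, exp_ip_pair X (V (bvec r.1 r.2)), Finset.mul_sum]

lemma sum4_swap {ι : Type*} (s : Finset ι) (f : ι → ι → ι → ι → ℝ) :
    (∑ a ∈ s, ∑ b ∈ s, ∑ c ∈ s, ∑ d ∈ s, f a b c d)
      = ∑ a ∈ s, ∑ b ∈ s, ∑ c ∈ s, ∑ d ∈ s, f c d a b := by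
  calc (∑ a ∈ s, ∑ b ∈ s, ∑ c ∈ s, ∑ d ∈ s, f a b c d)
      = ∑ a ∈ s, ∑ c ∈ s, ∑ b ∈ s, ∑ d ∈ s, f a b c d :=
        Finset.sum_congr rfl fun a _ => Finset.sum_comm
    _ = ∑ c ∈ s, ∑ a ∈ s, ∑ b ∈ s, ∑ d ∈ s, f a b c d := Finset.sum_comm
    _ = ∑ c ∈ s, ∑ a ∈ s, ∑ d ∈ s, ∑ b ∈ s, f a b c d :=
        Finset.sum_congr rfl fun c _ => Finset.sum_congr rfl fun a _ => Finset.sum_comm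
    _ = ∑ c ∈ s, ∑ d ∈ s, ∑ a ∈ s, ∑ b ∈ s, f a b c d :=
        Finset.sum_congr rfl fun c _ => Finset.sum_comm

lemma E_symm (A b : so n) (S T : Module.End ℝ (so n)) :
    (∑ q ∈ pairs n, ip (brk A (S (bvec q.1 q.2))) (T (brk b (bvec q.1 q.2))))
      = ∑ q ∈ pairs n, ip (brk A (T (bvec q.1 q.2))) (S (brk b (bvec q.1 q.2))) := by
  have expand : ∀ U V : Module.End ℝ (so n),
      (∑ q ∈ pairs n, ip (brk A (U (bvec q.1 q.2))) (V (brk b (bvec q.1 q.2))))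
        = ∑ q ∈ pairs n, ∑ q' ∈ pairs n, ∑ r ∈ pairs n, ∑ r' ∈ pairs n,
            ip (U (bvec q.1 q.2)) (bvec q'.1 q'.2) *
              (ip (brk b (bvec q.1 q.2)) (bvec r.1 r.2) *
                (ip (V (bvec r.1 r.2)) (bvec r'.1 r'.2) *
                  ip (brk A (bvec q'.1 q'.2)) (bvec r'.1 r'.2))) := by
    intro U V
    refine Finset.sum_congr rfl fun q _ => ?_
    rw [exp_brk_ip A (U (bvec q.1 q.2)) (V (brk b (bvec q.1 q.2)))]
    refine Finset.sum_congr rfl fun q' _ => ?_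
    rw [exp_ip_T (brk A (bvec q'.1 q'.2)) (brk b (bvec q.1 q.2)) V, Finset.mul_sum]
    refine Finset.sum_congr rfl fun r _ => ?_
    rw [Finset.mul_sum]
  rw [expand S T, expand T S, sum4_swap]
  refine Finset.sum_congr rfl fun q _ => ?_
  refine Finset.sum_congr rfl fun q' _ => ?_
  refine Finset.sum_congr rfl fun r _ => ?_
  refine Finset.sum_congr rfl fun r' _ => ?_
  rw [ip_brk_swap b (bvec r.1 r.2) (bvec q.1 q.2),
    ip_brk_swap A (bvec r'.1 r'.2) (bvec q'.1 q'.2)]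
  ring

lemma trace_mul_sharp_selfAdj (T R S : Module.End ℝ (so n)) (hT : selfAdjEnd T) :
    LinearMap.trace ℝ (so n) (T * sharp R S)
      = (1/2) * ∑ p ∈ pairs n, ∑ q ∈ pairs n,
          ip (brk (R (bvec p.1 p.2)) (S (bvec q.1 q.2))) (T (brk (bvec p.1 p.2) (bvec q.1 q.2))) := by
  rw [trace_mul_sharp]
  have h : ∀ p q : Fin n × Fin n,
      (ip (brk (R (bvec p.1 p.2)) (S (bvec q.1 q.2))) (T (brk (bvec p.1 p.2) (bvec q.1 q.2)))
        + ip (brk (bvec p.1 p.2) (bvec q.1 q.2)) (T (brk (R (bvec p.1 p.2)) (S (bvec q.1 q.2)))))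
      = 2 * ip (brk (R (bvec p.1 p.2)) (S (bvec q.1 q.2)))
          (T (brk (bvec p.1 p.2) (bvec q.1 q.2))) := by
    intro p q
    rw [← hT (brk (bvec p.1 p.2) (bvec q.1 q.2)) (brk (R (bvec p.1 p.2)) (S (bvec q.1 q.2))),
      ip_symm]
    ring
  calc (1/4 : ℝ) * ∑ p ∈ pairs n, ∑ q ∈ pairs n,
        (ip (brk (R (bvec p.1 p.2)) (S (bvec q.1 q.2))) (T (brk (bvec p.1 p.2) (bvec q.1 q.2)))
          + ip (brk (bvec p.1 p.2) (bvec q.1 q.2)) (T (brk (R (bvec p.1 p.2)) (S (bvec q.1 q.2)))))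
      = (1/4 : ℝ) * ∑ p ∈ pairs n, ∑ q ∈ pairs n,
        2 * ip (brk (R (bvec p.1 p.2)) (S (bvec q.1 q.2)))
          (T (brk (bvec p.1 p.2) (bvec q.1 q.2))) := by
        rw [Finset.sum_congr rfl fun p _ => Finset.sum_congr rfl fun q _ => h p q]
    _ = _ := by
        simp only [← Finset.mul_sum]
        ring

lemma trace_sharp_comm (R S T : Module.End ℝ (so n)) (hS : selfAdjEnd S) (hT : selfAdjEnd T) :
    LinearMap.trace ℝ (so n) (T * sharp R S) = LinearMap.trace ℝ (so n) (S * sharp R T) := by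
  rw [trace_mul_sharp_selfAdj T R S hT, trace_mul_sharp_selfAdj S R T hS]
  congr 1
  exact Finset.sum_congr rfl fun p _ => E_symm (R (bvec p.1 p.2)) (bvec p.1 p.2) S T


/-- Huisken's function `P(R) = (1/3)·tr(R³ + R·R^#)`. -/
def Pfun (R : Module.End ℝ (so n)) : ℝ :=
  (1 / 3) * LinearMap.trace ℝ ↥(so n) (R * R * R + R * sharp R R)

/-- The ODE `R' = R² + R^#` is the gradient flow of `P` on the space of self-adjoint
endomorphisms of `so n` with inner product `⟨R,S⟩ = tr(R∘S)`: the derivative of `P` at `R`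
in the direction of a self-adjoint `S` equals `tr((R² + R^#)∘S) = ⟨R² + R^#, S⟩`. -/
theorem stmt_10 {n : ℕ} (hn : 2 ≤ n) (R S : Module.End ℝ (so n))
    (hR : selfAdjEnd R) (hS : selfAdjEnd S) :
    HasDerivAt (fun t : ℝ => Pfun (R + t • S))
      (LinearMap.trace ℝ ↥(so n) ((R * R + sharp R R) * S)) 0 := by
  set T3 := LinearMap.trace ℝ (so n) with hT3
  set Y1 : Module.End ℝ (so n) :=
    R*R*S + R*S*R + S*R*R + (R*sharp R S + R*sharp S R + S*sharp R R) with hY1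
  set Y2 : Module.End ℝ (so n) :=
    R*S*S + S*R*S + S*S*R + (R*sharp S S + S*sharp R S + S*sharp S R) with hY2
  set Y3 : Module.End ℝ (so n) := S*S*S + S*sharp S S with hY3
  have hsharp : ∀ t : ℝ, sharp (R + t • S) (R + t • S)
      = sharp R R + t • sharp R S + t • sharp S R + (t*t) • sharp S S := by
    intro t
    simp only [sharp_add_left, sharp_add_right, sharp_smul_left, sharp_smul_right, smul_smul,
      smul_add]
    abel
  have key : ∀ t : ℝ, Pfun (R + t • S)
      = (1/3) * T3 (R*R*R + R * sharp R R) + t * ((1/3) * T3 Y1)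
        + t^2 * ((1/3) * T3 Y2) + t^3 * ((1/3) * T3 Y3) := by
    intro t
    have hX : (R + t • S) * (R + t • S) * (R + t • S)
          + (R + t • S) * sharp (R + t • S) (R + t • S)
        = (R*R*R + R * sharp R R) + t • Y1 + (t*t) • Y2 + (t*t*t) • Y3 := by
      rw [hsharp t, hY1, hY2, hY3]
      simp only [mul_add, add_mul, smul_mul_assoc, mul_smul_comm, smul_smul, smul_add]
      module
    rw [Pfun, hX]
    simp only [map_add, map_smul, smul_eq_mul, ← hT3]
    ring
  have hderiv : HasDerivAt
      (fun t : ℝ => (1/3) * T3 (R*R*R + R * sharp R R) + t * ((1/3) * T3 Y1)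
        + t^2 * ((1/3) * T3 Y2) + t^3 * ((1/3) * T3 Y3))
      ((1/3) * T3 Y1) 0 := by
    have h0 : HasDerivAt (fun _ : ℝ => (1/3) * T3 (R*R*R + R * sharp R R)) 0 0 :=
      hasDerivAt_const _ _
    have h1 : HasDerivAt (fun t : ℝ => t * ((1/3) * T3 Y1)) ((1/3) * T3 Y1) 0 := by
      simpa using (hasDerivAt_id (0:ℝ)).mul_const ((1/3) * T3 Y1)
    have h2 : HasDerivAt (fun t : ℝ => t^2 * ((1/3) * T3 Y2)) 0 0 := by
      simpa using (hasDerivAt_pow 2 (0:ℝ)).mul_const ((1/3) * T3 Y2)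
    have h3 : HasDerivAt (fun t : ℝ => t^3 * ((1/3) * T3 Y3)) 0 0 := by
      simpa using (hasDerivAt_pow 3 (0:ℝ)).mul_const ((1/3) * T3 Y3)
    have h4 := ((h0.add h1).add h2).add h3
    rw [zero_add, add_zero, add_zero] at h4
    exact h4
  have hfun : (fun t : ℝ => Pfun (R + t • S))
      = fun t : ℝ => (1/3) * T3 (R*R*R + R * sharp R R) + t * ((1/3) * T3 Y1)
        + t^2 * ((1/3) * T3 Y2) + t^3 * ((1/3) * T3 Y3) := funext key
  rw [hfun]
  have hc1 : (1/3) * T3 Y1 = T3 ((R * R + sharp R R) * S) := by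
    have tA : T3 (R*S*R) = T3 (R*R*S) := by
      rw [show R*S*R = (R*S)*R from rfl, LinearMap.trace_mul_comm, ← mul_assoc]
    have tB : T3 (S*R*R) = T3 (R*R*S) := by
      rw [mul_assoc, LinearMap.trace_mul_comm]
    have tC : T3 (R * sharp S R) = T3 (R * sharp R S) := by rw [sharp_symm S R]
    have tD : T3 (R * sharp R S) = T3 (S * sharp R R) := trace_sharp_comm R S R hS hR
    have tE : T3 (S * sharp R R) = T3 (sharp R R * S) := by rw [LinearMap.trace_mul_comm]
    have hsplit : T3 ((R * R + sharp R R) * S) = T3 (R*R*S) + T3 (sharp R R * S) := by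
      rw [add_mul, map_add]
    rw [hY1, hsplit]
    simp only [map_add]
    linarith
  rw [← hc1]
  exact hderiv


end BW
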